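/- For ℓ ≥ 3, let z_ℓ ∈ (0,1) be the unique root of ((1+z)^{ℓ−1} − (1−z)^{ℓ−1})/2 = 1. Then the quantity γ_ℓ := 1/((ℓ−1)·z_ℓ) is strictly increasing in ℓ; equivalently, (ℓ−1)·z_ℓ > ℓ·z_{ℓ+1} for all ℓ ≥ 3. -/

import Mathlib

/-- Binomial expansion of the odd part. -/
lemma expand_odd (n : ℕ) (x : ℝ) :
    (1 + x) ^ n - (1 - x) ^ n =
      ∑ k ∈ Finset.range (n + 1),
        (if Odd k then 2 * (n.choose k : ℝ) * x ^ k else 0) := by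
  have h1 : (1 + x) ^ n = ∑ k ∈ Finset.range (n + 1), x ^ k * (n.choose k : ℝ) := by
    rw [show (1 + x) = (x + 1) by ring, add_pow]
    simp
  have h2 : (1 - x) ^ n = ∑ k ∈ Finset.range (n + 1), (-x) ^ k * (n.choose k : ℝ) := by
    rw [show (1 - x) = (-x + 1) by ring, add_pow]
    simp
  rw [h1, h2, ← Finset.sum_sub_distrib]
  apply Finset.sum_congr rfl
  intro k _
  rcases Nat.even_or_odd k with he | ho
  · rw [he.neg_pow]
    simp [Nat.not_odd_iff_even.mpr he]
  · rw [ho.neg_pow]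
    simp only [if_pos ho]
    ring

lemma descFactorial_ineq (n k : ℕ) :
    n.descFactorial k * (n + 1) ^ k ≤ (n + 1).descFactorial k * n ^ k := by
  induction k with
  | zero => simp
  | succ k ih =>
    rw [Nat.descFactorial_succ, Nat.descFactorial_succ, pow_succ, pow_succ]
    calc (n - k) * n.descFactorial k * ((n + 1) ^ k * (n + 1))
        = ((n - k) * (n + 1)) * (n.descFactorial k * (n + 1) ^ k) := by ring
      _ ≤ ((n + 1 - k) * n) * ((n + 1).descFactorial k * n ^ k) := by
          apply Nat.mul_le_mul _ ih
          rcases le_or_gt k n with h | h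
          · obtain ⟨d, rfl⟩ := Nat.exists_eq_add_of_le h
            have e1 : k + d - k = d := by omega
            have e2 : k + d + 1 - k = d + 1 := by omega
            rw [e1, e2]
            nlinarith
          · have : n - k = 0 := by omega
            simp [this]
      _ = (n + 1 - k) * (n + 1).descFactorial k * (n ^ k * n) := by ring

lemma choose_ineq (n k : ℕ) :
    n.choose k * (n + 1) ^ k ≤ (n + 1).choose k * n ^ k := by
  have h := descFactorial_ineq n k
  rw [Nat.descFactorial_eq_factorial_mul_choose, Nat.descFactorial_eq_factorial_mul_choose] at h
  have hk : 0 < k.factorial := k.factorial_pos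
  calc n.choose k * (n + 1) ^ k
      = (k.factorial * (n.choose k * (n + 1) ^ k)) / k.factorial := by
        rw [Nat.mul_div_cancel_left _ hk]
    _ ≤ (k.factorial * ((n + 1).choose k * n ^ k)) / k.factorial := by
        apply Nat.div_le_div_right
        calc k.factorial * (n.choose k * (n + 1) ^ k)
            = k.factorial * n.choose k * (n + 1) ^ k := by ring
          _ ≤ k.factorial * (n + 1).choose k * n ^ k := h
          _ = k.factorial * ((n + 1).choose k * n ^ k) := by ring
    _ = (n + 1).choose k * n ^ k := Nat.mul_div_cancel_left _ hk

lemma choose_three_ineq {n : ℕ} (hn : 2 ≤ n) :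
    n.choose 3 * (n + 1) ^ 3 < (n + 1).choose 3 * n ^ 3 := by
  obtain ⟨m, rfl⟩ := Nat.exists_eq_add_of_le hn
  have h1 : (2 + m).choose 3 * 6 = (2 + m).descFactorial 3 := by
    rw [Nat.descFactorial_eq_factorial_mul_choose]
    norm_num [Nat.factorial]
    omega
  have h2 : (2 + m + 1).choose 3 * 6 = (2 + m + 1).descFactorial 3 := by
    rw [Nat.descFactorial_eq_factorial_mul_choose]
    norm_num [Nat.factorial]
    omega
  have hd1 : (2 + m).descFactorial 3 = m * (m + 1) * (m + 2) := by
    simp [Nat.descFactorial]; ring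
  have hd2 : (2 + m + 1).descFactorial 3 = (m + 1) * (m + 2) * (m + 3) := by
    simp [Nat.descFactorial]; ring
  have key : (2 + m).choose 3 * 6 * (2 + m + 1) ^ 3 < (2 + m + 1).choose 3 * 6 * (2 + m) ^ 3 := by
    rw [h1, h2, hd1, hd2]
    nlinarith
  nlinarith [key]

/-- Real coefficient comparison. -/
lemma coeff_real (n k : ℕ) {w : ℝ} (hw : 0 ≤ w) (hn : 1 ≤ n) :
    (n.choose k : ℝ) * (w / n) ^ k ≤ ((n + 1).choose k : ℝ) * (w / (n + 1)) ^ k := by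
  have hn0 : (0 : ℝ) < n := by exact_mod_cast hn
  have h' : (n.choose k : ℝ) * ((n : ℝ) + 1) ^ k ≤ ((n + 1).choose k : ℝ) * (n : ℝ) ^ k := by
    exact_mod_cast choose_ineq n k
  rw [div_pow, div_pow, ← mul_div_assoc, ← mul_div_assoc,
    div_le_div_iff₀ (by positivity) (by positivity)]
  calc (n.choose k : ℝ) * w ^ k * ((n : ℝ) + 1) ^ k
      = w ^ k * ((n.choose k : ℝ) * ((n : ℝ) + 1) ^ k) := by ring
    _ ≤ w ^ k * (((n + 1).choose k : ℝ) * (n : ℝ) ^ k) :=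
        mul_le_mul_of_nonneg_left h' (by positivity)
    _ = ((n + 1).choose k : ℝ) * w ^ k * (n : ℝ) ^ k := by ring

/-- The scaled step polynomial is increasing in the exponent. -/
lemma G_lt (n : ℕ) (hn : 2 ≤ n) {w : ℝ} (hw : 0 < w) :
    (1 + w / n) ^ n - (1 - w / n) ^ n <
      (1 + w / (n + 1)) ^ (n + 1) - (1 - w / (n + 1)) ^ (n + 1) := by
  have hn0 : (0 : ℝ) < n := by exact_mod_cast (by omega : 0 < n)
  rw [expand_odd n (w / n), expand_odd (n + 1) (w / (n + 1))]
  have hext : ∑ k ∈ Finset.range (n + 1),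
      (if Odd k then 2 * (n.choose k : ℝ) * (w / n) ^ k else 0) =
      ∑ k ∈ Finset.range (n + 2),
      (if Odd k then 2 * (n.choose k : ℝ) * (w / n) ^ k else 0) := by
    rw [Finset.sum_range_succ (n := n + 1)]
    simp [Nat.choose_succ_self]
  rw [hext]
  have hc : ((n : ℝ) + 1) = ((n + 1 : ℕ) : ℝ) := by push_cast; ring
  apply Finset.sum_lt_sum
  · intro k _
    split
    · have := coeff_real n k hw.le (by omega)
      push_cast at this ⊢
      linarith
    · exact le_rfl
  · refine ⟨3, Finset.mem_range.mpr (by omega), ?_⟩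
    have h3 : Odd 3 := by decide
    rw [if_pos h3, if_pos h3]
    have hA : (n.choose 3 : ℝ) * ((n : ℝ) + 1) ^ 3 < ((n + 1).choose 3 : ℝ) * (n : ℝ) ^ 3 := by
      exact_mod_cast choose_three_ineq hn
    have hw3 : (0 : ℝ) < w ^ 3 := by positivity
    rw [div_pow, div_pow, ← mul_div_assoc, ← mul_div_assoc,
      div_lt_div_iff₀ (by positivity) (by positivity)]
    push_cast at hA ⊢
    nlinarith [hA, hw3]

/-- Strict monotonicity of `z ↦ (1+z)^n - (1-z)^n` on `[0,∞)` for `n ≥ 1`. -/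
lemma f_strictMono (n : ℕ) (hn : 1 ≤ n) {a b : ℝ} (ha : 0 ≤ a) (hab : a < b) :
    (1 + a) ^ n - (1 - a) ^ n < (1 + b) ^ n - (1 - b) ^ n := by
  rw [expand_odd, expand_odd]
  apply Finset.sum_lt_sum
  · intro k _
    split
    · have : a ^ k ≤ b ^ k := pow_le_pow_left₀ ha hab.le k
      have hck : (0 : ℝ) ≤ (n.choose k : ℝ) := by positivity
      nlinarith
    · exact le_rfl
  · refine ⟨1, Finset.mem_range.mpr (by omega), ?_⟩
    have h1 : Odd 1 := by decide
    rw [if_pos h1, if_pos h1]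
    have hc : (0 : ℝ) < (n.choose 1 : ℝ) := by
      simp [Nat.choose_one_right]
      exact_mod_cast (by omega : 0 < n)
    simp only [pow_one]
    nlinarith

theorem step_polynomial_root_monotone
    (ℓ : ℕ) (hℓ : 3 ≤ ℓ) (z₁ z₂ : ℝ)
    (hz₁ : z₁ ∈ Set.Ioo (0 : ℝ) 1)
    (h₁ : ((1 + z₁) ^ (ℓ - 1) - (1 - z₁) ^ (ℓ - 1)) / 2 = 1)
    (hz₂ : z₂ ∈ Set.Ioo (0 : ℝ) 1)
    (h₂ : ((1 + z₂) ^ ℓ - (1 - z₂) ^ ℓ) / 2 = 1) :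
    (ℓ : ℝ) * z₂ < ((ℓ : ℝ) - 1) * z₁ := by
  obtain ⟨hz₁0, hz₁1⟩ := hz₁
  obtain ⟨hz₂0, hz₂1⟩ := hz₂
  set m : ℕ := ℓ - 1 with hm
  have hℓm : ℓ = m + 1 := by omega
  have hm2 : 2 ≤ m := by omega
  have hmR : ((ℓ : ℝ) - 1) = (m : ℝ) := by
    rw [hℓm]; push_cast; ring
  have hm0 : (0 : ℝ) < (m : ℝ) := by exact_mod_cast (by omega : 0 < m)
  -- set w := (m+1) * z₂
  set w : ℝ := ((m : ℝ) + 1) * z₂ with hwdef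
  have hw : 0 < w := by positivity
  have hwm1 : w / ((m : ℝ) + 1) = z₂ := by
    field_simp
    rw [hwdef]
  have h₂' : (1 + w / ((m : ℝ) + 1)) ^ (m + 1) - (1 - w / ((m : ℝ) + 1)) ^ (m + 1) = 2 := by
    rw [hwm1, ← hℓm]
    linarith [h₂]
  have h₁' : (1 + z₁) ^ m - (1 - z₁) ^ m = 2 := by
    have : ℓ - 1 = m := rfl
    rw [← this]
    linarith [h₁]
  have hG : (1 + w / m) ^ m - (1 - w / m) ^ m < 2 := by
    calc (1 + w / m) ^ m - (1 - w / m) ^ m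
        < (1 + w / ((m : ℝ) + 1)) ^ (m + 1) - (1 - w / ((m : ℝ) + 1)) ^ (m + 1) :=
          G_lt m hm2 hw
      _ = 2 := h₂'
  -- conclude w / m < z₁
  have hlt : w / m < z₁ := by
    by_contra hcon
    push_neg at hcon
    rcases eq_or_lt_of_le hcon with heq | hlt'
    · rw [heq] at h₁'
      linarith
    · have := f_strictMono m (by omega) hz₁0.le hlt'
      rw [h₁'] at this
      linarith
  have : w < (m : ℝ) * z₁ := by
    rw [div_lt_iff₀ hm0] at hlt
    linarith
  rw [hmR]
  calc (ℓ : ℝ) * z₂ = ((m : ℝ) + 1) * z₂ := by rw [hℓm]; push_cast; ring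
    _ = w := rfl
    _ < (m : ℝ) * z₁ := this
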